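/- The mutation-finite matrix of type G̃_2 admits an unfolding: the 5×5 skew-symmetric matrix C with rows (0, 0, 0, 1, 0), (0, 0, 0, 1, 0), (0, 0, 0, 1, 0), (−1, −1, −1, 0, 1), (0, 0, 0, −1, 0) is an unfolding of the 3×3 skew-symmetrizable matrix B with rows (0, 3, 0), (−1, 0, 1), (0, −1, 0), with respect to the index sets E_1 = {1, 2, 3}, E_2 = {4}, E_3 = {5}. -/

import Mathlib

open Matrix

/-- Matrix mutation in direction `k`. -/
def mutate {n : ℕ} (B : Matrix (Fin n) (Fin n) ℤ) (k : Fin n) : Matrix (Fin n) (Fin n) ℤ :=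
  Matrix.of fun i j =>
    if i = k ∨ j = k then -B i j
    else B i j + (|B i k| * B k j + B i k * |B k j|) / 2

/-- The mutation class of `B`: all matrices obtained from `B` by finite sequences of mutations. -/
def mutationClass {n : ℕ} (B : Matrix (Fin n) (Fin n) ℤ) : Set (Matrix (Fin n) (Fin n) ℤ) :=
  {B' | ∃ l : List (Fin n), B' = l.foldl mutate B}

/-- `B` is skew-symmetrizable: there are positive integers `d i` with `b_ij d_j = -(b_ji d_i)`. -/
def IsSkewSymmetrizable {n : ℕ} (B : Matrix (Fin n) (Fin n) ℤ) : Prop :=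
  ∃ d : Fin n → ℤ, (∀ i, 0 < d i) ∧ ∀ i j, B i j * d j = -(B j i * d i)

/-- Assertions (1)–(2) of the definition of unfolding, for the fibers `E i = π ⁻¹ {i}`:
(1) for all `i` and all `b` the sum of `C a b` over `a ∈ E i` equals `B i (π b)`;
(2) if `B (π a) (π b) ≥ 0` then `C a b ≥ 0`. -/
def SatisfiesUnfoldingConds {m n : ℕ} (π : Fin m → Fin n)
    (B : Matrix (Fin n) (Fin n) ℤ) (C : Matrix (Fin m) (Fin m) ℤ) : Prop :=
  (∀ (i : Fin n) (b : Fin m),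
      (∑ a ∈ Finset.univ.filter (fun a => π a = i), C a b) = B i (π b)) ∧
  (∀ a b : Fin m, 0 ≤ B (π a) (π b) → 0 ≤ C a b)

/-- The composite mutation `μ̂_i`: the composition of the mutations `μ_a` over all
`a ∈ E i = π ⁻¹ {i}`, performed in a fixed order. -/
def compMutate {m n : ℕ} (π : Fin m → Fin n) (C : Matrix (Fin m) (Fin m) ℤ)
    (i : Fin n) : Matrix (Fin m) (Fin m) ℤ :=
  ((Finset.univ.filter (fun a => π a = i)).sort (· ≤ ·)).foldl mutate C

/-- `C` is an unfolding of `B` (w.r.t. the index sets `E i = π ⁻¹ {i}`): after any finite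
sequence of composite mutations, assertions (1)–(2) hold for the correspondingly
mutated matrices. -/
def IsUnfolding {m n : ℕ} (π : Fin m → Fin n) (B : Matrix (Fin n) (Fin n) ℤ)
    (C : Matrix (Fin m) (Fin m) ℤ) : Prop :=
  ∀ l : List (Fin n),
    SatisfiesUnfoldingConds π (l.foldl mutate B) (l.foldl (compMutate π) C)

def G2P : Fin 12 → Matrix (Fin 3) (Fin 3) ℤ × Matrix (Fin 5) (Fin 5) ℤ :=
  ![(!![0, 3, 0; -1, 0, 1; 0, -1, 0], !![0, 0, 0, 1, 0; 0, 0, 0, 1, 0; 0, 0, 0, 1, 0; -1, -1, -1, 0, 1; 0, 0, 0, -1, 0]),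
  (!![0, -3, 0; 1, 0, 1; 0, -1, 0], !![0, 0, 0, -1, 0; 0, 0, 0, -1, 0; 0, 0, 0, -1, 0; 1, 1, 1, 0, 1; 0, 0, 0, -1, 0]),
  (!![0, -3, 3; 1, 0, -1; -1, 1, 0], !![0, 0, 0, -1, 1; 0, 0, 0, -1, 1; 0, 0, 0, -1, 1; 1, 1, 1, 0, -1; -1, -1, -1, 1, 0]),
  (!![0, 3, 0; -1, 0, -1; 0, 1, 0], !![0, 0, 0, 1, 0; 0, 0, 0, 1, 0; 0, 0, 0, 1, 0; -1, -1, -1, 0, -1; 0, 0, 0, 1, 0]),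
  (!![0, -3, 0; 1, 0, -1; 0, 1, 0], !![0, 0, 0, -1, 0; 0, 0, 0, -1, 0; 0, 0, 0, -1, 0; 1, 1, 1, 0, -1; 0, 0, 0, 1, 0]),
  (!![0, 3, -3; -1, 0, 2; 1, -2, 0], !![0, 0, 0, 1, -1; 0, 0, 0, 1, -1; 0, 0, 0, 1, -1; -1, -1, -1, 0, 2; 1, 1, 1, -2, 0]),
  (!![0, 0, -3; 0, 0, 1; 1, -1, 0], !![0, 0, 0, 0, -1; 0, 0, 0, 0, -1; 0, 0, 0, 0, -1; 0, 0, 0, 0, 1; 1, 1, 1, -1, 0]),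
  (!![0, 3, -3; -1, 0, 1; 1, -1, 0], !![0, 0, 0, 1, -1; 0, 0, 0, 1, -1; 0, 0, 0, 1, -1; -1, -1, -1, 0, 1; 1, 1, 1, -1, 0]),
  (!![0, -3, 3; 1, 0, -2; -1, 2, 0], !![0, 0, 0, -1, 1; 0, 0, 0, -1, 1; 0, 0, 0, -1, 1; 1, 1, 1, 0, -2; -1, -1, -1, 2, 0]),
  (!![0, 0, 3; 0, 0, 1; -1, -1, 0], !![0, 0, 0, 0, 1; 0, 0, 0, 0, 1; 0, 0, 0, 0, 1; 0, 0, 0, 0, 1; -1, -1, -1, -1, 0]),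
  (!![0, 0, -3; 0, 0, -1; 1, 1, 0], !![0, 0, 0, 0, -1; 0, 0, 0, 0, -1; 0, 0, 0, 0, -1; 0, 0, 0, 0, -1; 1, 1, 1, 1, 0]),
  (!![0, 0, 3; 0, 0, -1; -1, 1, 0], !![0, 0, 0, 0, 1; 0, 0, 0, 0, 1; 0, 0, 0, 0, 1; 0, 0, 0, 0, -1; -1, -1, -1, 1, 0])
]

/-- Explicit form of the composite mutations. -/
def cmut (C : Matrix (Fin 5) (Fin 5) ℤ) : Fin 3 → Matrix (Fin 5) (Fin 5) ℤ
  | 0 => mutate (mutate (mutate C 0) 1) 2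
  | 1 => mutate C 3
  | 2 => mutate C 4

lemma sortE1 :
    ((Finset.univ.filter (fun a => (![0, 0, 0, 1, 2] : Fin 5 → Fin 3) a = 0)).sort (· ≤ ·))
      = [0, 1, 2] := by
  have h : (Finset.univ.filter (fun a => (![0, 0, 0, 1, 2] : Fin 5 → Fin 3) a = 0))
      = ({0, 1, 2} : Finset (Fin 5)) := by decide
  rw [h, Finset.sort_insert _ (by decide) (by decide),
    Finset.sort_insert _ (by decide) (by decide), Finset.sort_singleton]

lemma sortE2 :
    ((Finset.univ.filter (fun a => (![0, 0, 0, 1, 2] : Fin 5 → Fin 3) a = 1)).sort (· ≤ ·))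
      = [3] := by
  have h : (Finset.univ.filter (fun a => (![0, 0, 0, 1, 2] : Fin 5 → Fin 3) a = 1))
      = ({3} : Finset (Fin 5)) := by decide
  rw [h, Finset.sort_singleton]

lemma sortE3 :
    ((Finset.univ.filter (fun a => (![0, 0, 0, 1, 2] : Fin 5 → Fin 3) a = 2)).sort (· ≤ ·))
      = [4] := by
  have h : (Finset.univ.filter (fun a => (![0, 0, 0, 1, 2] : Fin 5 → Fin 3) a = 2))
      = ({4} : Finset (Fin 5)) := by decide
  rw [h, Finset.sort_singleton]

lemma compE1 (C : Matrix (Fin 5) (Fin 5) ℤ) :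
    compMutate (![0, 0, 0, 1, 2] : Fin 5 → Fin 3) C 0 = cmut C 0 := by
  unfold compMutate; rw [sortE1]; rfl

lemma compE2 (C : Matrix (Fin 5) (Fin 5) ℤ) :
    compMutate (![0, 0, 0, 1, 2] : Fin 5 → Fin 3) C 1 = cmut C 1 := by
  unfold compMutate; rw [sortE2]; rfl

lemma compE3 (C : Matrix (Fin 5) (Fin 5) ℤ) :
    compMutate (![0, 0, 0, 1, 2] : Fin 5 → Fin 3) C 2 = cmut C 2 := by
  unfold compMutate; rw [sortE3]; rfl

lemma compMutate_eq_cmut (C : Matrix (Fin 5) (Fin 5) ℤ) (i : Fin 3) :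
    compMutate (![0, 0, 0, 1, 2] : Fin 5 → Fin 3) C i = cmut C i := by
  fin_cases i
  · exact compE1 C
  · exact compE2 C
  · exact compE3 C

lemma G2_closed : ∀ j : Fin 12, ∀ i : Fin 3, ∃ j' : Fin 12,
    mutate (G2P j).1 i = (G2P j').1 ∧
    compMutate (![0, 0, 0, 1, 2] : Fin 5 → Fin 3) (G2P j).2 i = (G2P j').2 := by
  intro j i
  rw [compMutate_eq_cmut]
  revert j i
  decide

instance decMatrixNonneg {m n : Type} (M : Matrix m n ℤ) (a : m) (b : n) :
    Decidable (0 ≤ M a b) :=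
  Int.decLe _ _

lemma G2_conds : ∀ j : Fin 12,
    SatisfiesUnfoldingConds (![0, 0, 0, 1, 2] : Fin 5 → Fin 3) (G2P j).1 (G2P j).2 := by
  unfold SatisfiesUnfoldingConds
  decide

lemma G2_foldl : ∀ (l : List (Fin 3)) (j : Fin 12), ∃ j' : Fin 12,
    l.foldl mutate (G2P j).1 = (G2P j').1 ∧
    l.foldl (compMutate (![0, 0, 0, 1, 2] : Fin 5 → Fin 3)) (G2P j).2 = (G2P j').2 := by
  intro l
  induction l with
  | nil => intro j; exact ⟨j, rfl, rfl⟩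
  | cons k t ih =>
    intro j
    obtain ⟨j1, h1, h2⟩ := G2_closed j k
    obtain ⟨j', h1', h2'⟩ := ih j1
    exact ⟨j', by simp [List.foldl_cons, h1, h1'], by simp [List.foldl_cons, h2, h2']⟩

/-- The mutation-finite matrix of type `G̃_2` admits the stated unfolding, with
`E_1 = {1, 2, 3}`, `E_2 = {4}`, `E_3 = {5}`. -/
theorem unfolding_G2_affine :
    IsUnfolding (![0, 0, 0, 1, 2] : Fin 5 → Fin 3)
      !![0, 3, 0; -1, 0, 1; 0, -1, 0]
      !![0, 0, 0, 1, 0; 0, 0, 0, 1, 0; 0, 0, 0, 1, 0;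
         -1, -1, -1, 0, 1; 0, 0, 0, -1, 0] := by
  intro l
  obtain ⟨j', h1, h2⟩ := G2_foldl l 0
  have e1 : (G2P 0).1 = !![0, 3, 0; -1, 0, 1; 0, -1, 0] := rfl
  have e2 : (G2P 0).2 = !![0, 0, 0, 1, 0; 0, 0, 0, 1, 0; 0, 0, 0, 1, 0;
      -1, -1, -1, 0, 1; 0, 0, 0, -1, 0] := rfl
  rw [← e1, ← e2, h1, h2]
  exact G2_conds j'
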